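/- Let A, B, C be nonempty compact convex sets in ℝ^n. If A ⊖ C and C ⊖ B exist, then A ⊖ B exists and A ⊖ B = (A ⊖ C) + (C ⊖ B). -/

import Mathlib

open scoped Pointwise Classical

def HukExists {n : ℕ} (A B : Set (EuclideanSpace ℝ (Fin n))) : Prop :=
  ∃ C : Set (EuclideanSpace ℝ (Fin n)), C.Nonempty ∧ IsCompact C ∧ Convex ℝ C ∧ A = B + C

noncomputable def huk {n : ℕ} (A B : Set (EuclideanSpace ℝ (Fin n))) :
    Set (EuclideanSpace ℝ (Fin n)) :=
  if h : HukExists A B then h.choose else ∅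

/-- Rådström cancellation, inclusion form. -/
lemma radstrom_subset {V : Type*} [NormedAddCommGroup V] [NormedSpace ℝ V]
    (B D D' : Set V) (hB : B.Nonempty) (hBb : Bornology.IsBounded B)
    (hD'c : IsClosed D') (hD'v : Convex ℝ D') (h : B + D ⊆ B + D') : D ⊆ D' := by
  obtain ⟨b0, hb0⟩ := hB
  obtain ⟨R, hR⟩ := isBounded_iff_forall_norm_le.1 hBb
  intro d hd
  have key : ∀ x ∈ B, ∃ b' ∈ B, ∃ e' ∈ D', x + d = b' + e' := by
    intro x hx
    have hx' : x + d ∈ B + D' := h (Set.add_mem_add hx hd)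
    obtain ⟨b', hb', e', he', heq⟩ := hx'
    exact ⟨b', hb', e', he', heq.symm⟩
  choose f hf g hg heq using key
  let bs : ℕ → {x : V // x ∈ B} := fun k =>
    Nat.rec ⟨b0, hb0⟩ (fun _ p => ⟨f p.1 p.2, hf p.1 p.2⟩) k
  let e : ℕ → V := fun k => g (bs k).1 (bs k).2
  have he' : ∀ k, e k ∈ D' := fun k => hg _ _
  have hsum : ∀ k : ℕ, b0 + (k : ℕ) • d = (bs k).1 + ∑ i ∈ Finset.range k, e i := by
    intro k
    induction k with
    | zero => simp [bs]
    | succ k ih =>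
      have hstep : (bs k).1 + d = (bs (k + 1)).1 + e k := heq (bs k).1 (bs k).2
      rw [Finset.sum_range_succ, succ_nsmul, ← add_assoc, ih,
        show ((bs k).1 + ∑ i ∈ Finset.range k, e i + d)
          = ((bs k).1 + d) + ∑ i ∈ Finset.range k, e i from by abel, hstep]
      abel
  -- the convex combination
  let c : ℕ → V := fun k => (k : ℝ)⁻¹ • ∑ i ∈ Finset.range k, e i
  have hc_mem : ∀ k : ℕ, 1 ≤ k → c k ∈ D' := by
    intro k hk
    have hkpos : (0:ℝ) < k := by exact_mod_cast hk
    have := hD'v.sum_mem (t := Finset.range k) (w := fun _ => (k : ℝ)⁻¹) (z := e)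
      (fun i _ => by positivity)
      (by simp [Finset.sum_const, mul_inv_cancel₀ hkpos.ne'])
      (fun i _ => he' i)
    simpa [c, Finset.smul_sum] using this
  have hc_eq : ∀ k : ℕ, 1 ≤ k → c k = d - (k : ℝ)⁻¹ • ((bs k).1 - b0) := by
    intro k hk
    have hkpos : (0:ℝ) < k := by exact_mod_cast hk
    have h1 : (∑ i ∈ Finset.range k, e i) = (k : ℕ) • d - ((bs k).1 - b0) := by
      have := hsum k
      have : (bs k).1 + ∑ i ∈ Finset.range k, e i = b0 + (k : ℕ) • d := this.symm
      linear_combination (norm := abel_nf) this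
    rw [show c k = (k : ℝ)⁻¹ • ∑ i ∈ Finset.range k, e i from rfl, h1, smul_sub]
    congr 1
    rw [← Nat.cast_smul_eq_nsmul ℝ, smul_smul, inv_mul_cancel₀ hkpos.ne', one_smul]
  -- tendsto
  have htend : Filter.Tendsto c Filter.atTop (nhds d) := by
    have hzero : Filter.Tendsto (fun k : ℕ => (k : ℝ)⁻¹ • ((bs k).1 - b0))
        Filter.atTop (nhds 0) := by
      apply squeeze_zero_norm (a := fun k : ℕ => (k : ℝ)⁻¹ * (2 * R))
      · intro k
        rw [norm_smul, norm_inv, Real.norm_natCast]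
        gcongr
        calc ‖(bs k).1 - b0‖ ≤ ‖(bs k).1‖ + ‖b0‖ := norm_sub_le _ _
            _ ≤ R + R := add_le_add (hR _ (bs k).2) (hR _ hb0)
            _ = 2 * R := by ring
      · have : Filter.Tendsto (fun k : ℕ => (k : ℝ)⁻¹) Filter.atTop (nhds 0) := by
          simpa only [one_div] using (tendsto_one_div_atTop_nhds_zero_nat : Filter.Tendsto (fun n : ℕ => 1 / (n : ℝ)) Filter.atTop (nhds 0))
        simpa using this.mul_const (2 * R)
    have : Filter.Tendsto (fun k : ℕ => d - (k : ℝ)⁻¹ • ((bs k).1 - b0))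
        Filter.atTop (nhds (d - 0)) := tendsto_const_nhds.sub hzero
    rw [sub_zero] at this
    apply this.congr'
    filter_upwards [Filter.eventually_ge_atTop 1] with k hk
    exact (hc_eq k hk).symm
  exact hD'c.mem_of_tendsto htend
    (Filter.eventually_atTop.2 ⟨1, fun k hk => hc_mem k hk⟩)

lemma radstrom_cancel {V : Type*} [NormedAddCommGroup V] [NormedSpace ℝ V]
    (B D D' : Set V) (hB : B.Nonempty) (hBb : Bornology.IsBounded B)
    (hDc : IsClosed D) (hDv : Convex ℝ D) (hD'c : IsClosed D') (hD'v : Convex ℝ D')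
    (h : B + D = B + D') : D = D' :=
  Set.Subset.antisymm
    (radstrom_subset B D D' hB hBb hD'c hD'v h.le)
    (radstrom_subset B D' D hB hBb hDc hDv h.ge)

theorem hukuhara_trans {n : ℕ} (A B C : Set (EuclideanSpace ℝ (Fin n)))
    (hA : A.Nonempty) (hAc : IsCompact A) (hAv : Convex ℝ A)
    (hB : B.Nonempty) (hBc : IsCompact B) (hBv : Convex ℝ B)
    (hC : C.Nonempty) (hCc : IsCompact C) (hCv : Convex ℝ C)
    (h1 : HukExists A C) (h2 : HukExists C B) :
    HukExists A B ∧ huk A B = huk A C + huk C B := by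
  obtain ⟨hD1ne, hD1c, hD1v, hAeq⟩ := h1.choose_spec
  obtain ⟨hD2ne, hD2c, hD2v, hCeq⟩ := h2.choose_spec
  set D1 := h1.choose with hD1
  set D2 := h2.choose with hD2
  have hAB : A = B + (D1 + D2) := by
    rw [hAeq, hCeq]; abel
  have hEx : HukExists A B :=
    ⟨D1 + D2, hD1ne.add hD2ne, hD1c.add hD2c, hD1v.add hD2v, hAB⟩
  refine ⟨hEx, ?_⟩
  obtain ⟨hEne, hEc, hEv, hAE⟩ := hEx.choose_spec
  have h1' : huk A C = D1 := by rw [huk, dif_pos h1]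
  have h2' : huk C B = D2 := by rw [huk, dif_pos h2]
  have h3' : huk A B = hEx.choose := by rw [huk, dif_pos hEx]
  rw [h1', h2', h3']
  exact radstrom_cancel B hEx.choose (D1 + D2) hB hBc.isBounded
    hEc.isClosed hEv (hD1c.add hD2c).isClosed (hD1v.add hD2v)
    (hAE ▸ hAB)
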